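/- Under the setup Σ₀ = Ψ₀Ψ₀ᵀ, Σ₁ = Ψ₁Ψ₁ᵀ invertible, β = Ψ₁Ψ₀ᵀΣ₀⁻¹, Σ₂ = Σ₁ - Ψ₁Ψ₀ᵀβᵀ, Σ₃ = Σ₁ - Ψ₁Ψ₀ᵀβᵀ - βΨ₀Ψ₁ᵀ + βΣ₀βᵀ, and γ < 0: if Σ₃ is positive definite, then the matrix Q_u = (2γ/(1-γ))Σ₂ᵀΣ₁⁻¹Σ₂ + 2Σ₃ is symmetric positive definite. -/

import Mathlib

open Matrix

lemma aux_dot_self_pos {n : Type*} [Fintype n] {v : n → ℝ} (hv : v ≠ 0) :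
    0 < dotProduct v v := by
  rcases lt_or_eq_of_le (Finset.sum_nonneg (fun i _ => mul_self_nonneg (v i)) :
      (0:ℝ) ≤ dotProduct v v) with h | h
  · exact h
  · exact absurd (dotProduct_self_eq_zero.mp h.symm) hv

lemma aux_psd_of_isUnit {n : Type*} [Fintype n] [DecidableEq n] {M : Matrix n n ℝ}
    (h : M.PosSemidef) (hu : IsUnit M) : M.PosDef := by
  obtain ⟨B, hB⟩ : ∃ B : Matrix n n ℝ, M = Bᴴ * B := by
    open scoped MatrixOrder in
    obtain ⟨B, hB⟩ := CStarAlgebra.nonneg_iff_eq_star_mul_self.mp h.nonneg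
    exact ⟨B, by rw [hB, star_eq_conjTranspose]⟩
  refine PosDef.of_dotProduct_mulVec_pos h.1 (fun x hx => ?_)
  have hinj := Matrix.mulVec_injective_iff_isUnit.mpr hu
  have hBx : B *ᵥ x ≠ 0 := by
    intro h0
    apply hx
    apply hinj
    rw [hB, ← mulVec_mulVec, h0, mulVec_zero, mulVec_zero]
  have : star x ⬝ᵥ M *ᵥ x = (B *ᵥ x) ⬝ᵥ (B *ᵥ x) := by
    rw [hB, ← mulVec_mulVec, dotProduct_mulVec]
    congr 1
    rw [show (Bᴴ : Matrix n n ℝ) = Bᵀ from by ext i j; simp [conjTranspose_apply],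
      vecMul_transpose]
    simp
  rw [this]
  exact aux_dot_self_pos hBx

lemma aux_smul_psd {n : Type*} [Fintype n] {a : ℝ} (ha : 0 ≤ a) {M : Matrix n n ℝ}
    (h : M.PosSemidef) : (a • M).PosSemidef := by
  refine PosSemidef.of_dotProduct_mulVec_nonneg ?_ (fun x => ?_)
  · unfold Matrix.IsHermitian
    rw [conjTranspose_smul, h.1.eq]
    simp
  · rw [smul_mulVec, dotProduct_smul, smul_eq_mul]
    exact mul_nonneg ha (h.dotProduct_mulVec_nonneg x)

lemma aux_smul_pd {n : Type*} [Fintype n] {a : ℝ} (ha : 0 < a) {M : Matrix n n ℝ}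
    (h : M.PosDef) : (a • M).PosDef := by
  refine PosDef.of_dotProduct_mulVec_pos ?_ (fun x hx => ?_)
  · unfold Matrix.IsHermitian
    rw [conjTranspose_smul, h.1.eq]
    simp
  · rw [smul_mulVec, dotProduct_smul, smul_eq_mul]
    exact mul_pos ha (h.dotProduct_mulVec_pos hx)

lemma aux_ct {m n : Type*} (A : Matrix m n ℝ) : Aᴴ = Aᵀ := by
  ext i j; simp [Matrix.conjTranspose_apply]

theorem stmt_11 (d m : ℕ) (Ψ₀ : Matrix (Fin m) (Fin (d + m)) ℝ)
    (Ψ₁ : Matrix (Fin d) (Fin (d + m)) ℝ)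
    (hS0 : IsUnit (Ψ₀ * Ψ₀ᵀ)) (hS1 : IsUnit (Ψ₁ * Ψ₁ᵀ)) (γ : ℝ) (hγ : γ < 0)
    (S0 : Matrix (Fin m) (Fin m) ℝ) (hS0def : S0 = Ψ₀ * Ψ₀ᵀ)
    (S1 : Matrix (Fin d) (Fin d) ℝ) (hS1def : S1 = Ψ₁ * Ψ₁ᵀ)
    (β : Matrix (Fin d) (Fin m) ℝ) (hβ : β = Ψ₁ * Ψ₀ᵀ * S0⁻¹)
    (S2 : Matrix (Fin d) (Fin d) ℝ) (hS2 : S2 = S1 - Ψ₁ * Ψ₀ᵀ * βᵀ)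
    (S3 : Matrix (Fin d) (Fin d) ℝ)
    (hS3 : S3 = S1 - Ψ₁ * Ψ₀ᵀ * βᵀ - β * Ψ₀ * Ψ₁ᵀ + β * S0 * βᵀ)
    (hS3pd : S3.PosDef) :
    ((2 * γ / (1 - γ)) • (S2ᵀ * S1⁻¹ * S2) + (2 : ℝ) • S3).PosDef := by
  have hdet0 : IsUnit S0.det := by
    rw [hS0def]; exact (Matrix.isUnit_iff_isUnit_det _).mp hS0
  have hS0T : S0ᵀ = S0 := by rw [hS0def]; simp [Matrix.transpose_mul]
  have hinvT : S0⁻¹ᵀ = S0⁻¹ := by rw [Matrix.transpose_nonsing_inv, hS0T]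
  have hβT : βᵀ = S0⁻¹ * (Ψ₀ * Ψ₁ᵀ) := by
    rw [hβ]; simp [Matrix.transpose_mul, hinvT, Matrix.mul_assoc]
  have hβS0βT : β * S0 * βᵀ = Ψ₁ * Ψ₀ᵀ * βᵀ := by
    rw [hβ, Matrix.mul_assoc (Ψ₁ * Ψ₀ᵀ) S0⁻¹ S0, Matrix.nonsing_inv_mul _ hdet0,
      Matrix.mul_one]
  have hβΨ : β * Ψ₀ * Ψ₁ᵀ = Ψ₁ * Ψ₀ᵀ * βᵀ := by
    rw [hβT, hβ]; simp only [Matrix.mul_assoc]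
  have h32 : S3 = S2 := by rw [hS3, hS2, hβΨ, hβS0βT]; abel
  have hct3 : S3ᴴ = S3 := hS3pd.1
  have hS3T : S3ᵀ = S3 := by rw [← aux_ct, hct3]
  have hS2T : S2ᵀ = S2 := by rw [← h32, hS3T]
  set N := Ψ₁ * Ψ₀ᵀ * βᵀ with hN
  have hS0psd : S0.PosSemidef := by
    rw [hS0def, ← aux_ct]; exact Matrix.posSemidef_self_mul_conjTranspose Ψ₀
  have hS0pd : S0.PosDef := aux_psd_of_isUnit hS0psd (hS0def ▸ hS0)
  have hNpsd : N.PosSemidef := by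
    have hNe : N = (Ψ₁ * Ψ₀ᵀ) * S0⁻¹ * (Ψ₁ * Ψ₀ᵀ)ᴴ := by
      rw [hN, hβT, aux_ct, Matrix.transpose_mul, Matrix.transpose_transpose,
        Matrix.mul_assoc]
      simp only [Matrix.mul_assoc]
    rw [hNe]
    exact hS0pd.inv.posSemidef.mul_mul_conjTranspose_same _
  have hS1eq : S1 = S3 + N := by rw [h32, hS2]; abel
  have hS1pd : S1.PosDef := by rw [hS1eq]; exact hS3pd.add_posSemidef hNpsd
  haveI : Invertible S1 := hS1pd.isUnit.invertible
  have hblock1 : (fromBlocks S3 S3 S3 S3).PosSemidef := by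
    have he : fromBlocks S3 S3 S3 S3 =
        (fromRows (1 : Matrix (Fin d) (Fin d) ℝ) 1) * S3 *
          (fromRows (1 : Matrix (Fin d) (Fin d) ℝ) 1)ᴴ := by
      rw [aux_ct, transpose_fromRows, transpose_one, fromRows_mul,
        fromRows_mul_fromCols]
      simp
    rw [he]
    exact hS3pd.posSemidef.mul_mul_conjTranspose_same _
  have hblock2 : (fromBlocks N (0 : Matrix (Fin d) (Fin d) ℝ)
      (0 : Matrix (Fin d) (Fin d) ℝ) (0 : Matrix (Fin d) (Fin d) ℝ)).PosSemidef := by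
    have he : fromBlocks N (0 : Matrix (Fin d) (Fin d) ℝ)
        (0 : Matrix (Fin d) (Fin d) ℝ) (0 : Matrix (Fin d) (Fin d) ℝ) =
        (fromRows (1 : Matrix (Fin d) (Fin d) ℝ) 0) * N *
          (fromRows (1 : Matrix (Fin d) (Fin d) ℝ) 0)ᴴ := by
      rw [aux_ct, transpose_fromRows, transpose_one, transpose_zero, fromRows_mul,
        fromRows_mul_fromCols]
      simp
    rw [he]
    exact hNpsd.mul_mul_conjTranspose_same _
  have hblocks : (fromBlocks S1 S3 S3ᴴ S3).PosSemidef := by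
    rw [hct3]
    have he : fromBlocks S1 S3 S3 S3 = fromBlocks S3 S3 S3 S3 + fromBlocks N 0 0 0 := by
      rw [fromBlocks_add, hS1eq]; simp
    rw [he]
    exact hblock1.add hblock2
  have hkey : (S3 - S3 * S1⁻¹ * S3).PosSemidef := by
    have := (Matrix.PosDef.fromBlocks₁₁ S3 S3 hS1pd).mp hblocks
    rwa [hct3] at this
  have hγ1 : 0 < 1 - γ := by linarith
  set c := 2 * γ / (1 - γ) with hc
  have hc2 : 0 < c + 2 := by
    have he : c + 2 = 2 / (1 - γ) := by rw [hc]; field_simp; ring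
    rw [he]; positivity
  have hcneg : 0 ≤ -c := by
    have : c ≤ 0 := div_nonpos_of_nonpos_of_nonneg (by linarith) (by linarith)
    linarith
  rw [hS2T, ← h32]
  have he : c • (S3 * S1⁻¹ * S3) + (2 : ℝ) • S3 =
      (c + 2) • S3 + (-c) • (S3 - S3 * S1⁻¹ * S3) := by module
  rw [he]
  exact (aux_smul_pd hc2 hS3pd).add_posSemidef (aux_smul_psd hcneg hkey)
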